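/- arXiv:2411.06883 — 5 statements merged into one kernel-verified Lean document; each statement's English description precedes it below -/
import Mathlib

section
/- If A ∈ ℝ^{n×n} is semi-Schur, then ℝ^n is the direct sum of the range of A − I and the kernel of A − I, i.e., ran(A − I) + ker(A − I) = ℝ^n and ran(A − I) ∩ ker(A − I) = {0}. -/
open Matrix Polynomial

/-- The characteristic polynomial of a real matrix, viewed over `ℂ`. Its roots are the
(complex) eigenvalues of the matrix. -/
noncomputable def charpolyC {ι : Type*} [Fintype ι] [DecidableEq ι]
    (A : Matrix ι ι ℝ) : Polynomial ℂ :=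
  (A.charpoly).map (algebraMap ℝ ℂ)

/-- A real square matrix is *semi-Schur* if every (complex) eigenvalue either has modulus
strictly less than `1`, or equals `1` and `1` is non-defective (its geometric multiplicity
`dim ker (A - I)` equals its algebraic multiplicity as a root of the characteristic
polynomial). -/
def IsSemiSchur {ι : Type*} [Fintype ι] [DecidableEq ι] (A : Matrix ι ι ℝ) : Prop :=
  ∀ μ : ℂ, (charpolyC A).IsRoot μ →
    ‖μ‖ < 1 ∨ (μ = 1 ∧
      Module.finrank ℝ (LinearMap.ker (A - 1).mulVecLin) = (charpolyC A).rootMultiplicity 1)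

lemma charpoly_sub_one_comp {n : ℕ} (A : Matrix (Fin n) (Fin n) ℝ) :
    (A - 1).charpoly = (A.charpoly).comp (X + C 1) := by
  let f : ℝ[X] →+* ℝ[X] := (aeval (X + C 1 : ℝ[X])).toRingHom
  have hf : ∀ p : ℝ[X], f p = p.comp (X + C 1) := fun p => by
    simp [f, Polynomial.comp, aeval_def, Polynomial.algebraMap_eq]
  rw [← hf]
  rw [Matrix.charpoly, Matrix.charpoly, RingHom.map_det]
  congr 1
  ext i j
  by_cases hij : i = j
  · subst hij
    simp [charmatrix_apply_eq, f]
    ring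
  · simp [charmatrix_apply_ne _ _ _ hij, f, Matrix.one_apply_ne hij]

lemma finrank_maxGen_eq {n : ℕ} (A : Matrix (Fin n) (Fin n) ℝ) :
    Module.finrank ℝ (Module.End.maxGenEigenspace ((A - 1).mulVecLin : Module.End ℝ (Fin n → ℝ)) 0)
      = (A.charpoly).rootMultiplicity 1 := by
  rw [LinearMap.finrank_maxGenEigenspace_zero_eq]
  rw [rootMultiplicity_eq_natTrailingDegree, ← charpoly_sub_one_comp]
  have h1 : LinearMap.toMatrix (Pi.basisFun ℝ (Fin n)) (Pi.basisFun ℝ (Fin n))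
      (A - 1).mulVecLin = A - 1 := by
    rw [LinearMap.toMatrix_eq_toMatrix']
    have h2 : (A - 1).mulVecLin = Matrix.toLin' (A - 1) := by ext v i; rfl
    rw [h2, LinearMap.toMatrix'_toLin']
  have key : ((A - 1).mulVecLin : Module.End ℝ (Fin n → ℝ)).charpoly
      = (A - 1).charpoly := by
    conv_rhs => rw [← h1]
    rw [LinearMap.charpoly_toMatrix]
  rw [key]

/-- If `A` is semi-Schur, then `ℝⁿ = ran(A - I) ⊕ ker(A - I)`. -/
theorem semiSchur_range_ker_direct_sum {n : ℕ} (A : Matrix (Fin n) (Fin n) ℝ)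
    (hA : IsSemiSchur A) :
    LinearMap.range (A - 1).mulVecLin ⊔ LinearMap.ker (A - 1).mulVecLin = ⊤ ∧
      LinearMap.range (A - 1).mulVecLin ⊓ LinearMap.ker (A - 1).mulVecLin = ⊥ := by
  set φ : Module.End ℝ (Fin n → ℝ) := (A - 1).mulVecLin with hφ
  have hle : LinearMap.ker φ ≤ Module.End.maxGenEigenspace φ 0 := by
    intro x hx
    rw [Module.End.mem_maxGenEigenspace]
    exact ⟨1, by simpa using hx⟩
  have hmul : (charpolyC A).rootMultiplicity 1 = (A.charpoly).rootMultiplicity 1 := by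
    have := (eq_rootMultiplicity_map (p := A.charpoly)
      (f := algebraMap ℝ ℂ) (RingHom.injective _) 1).symm
    simpa [charpolyC] using this
  have hfin : Module.finrank ℝ (Module.End.maxGenEigenspace φ 0)
      ≤ Module.finrank ℝ (LinearMap.ker φ) := by
    rw [hφ, finrank_maxGen_eq]
    by_cases h1 : (charpolyC A).IsRoot 1
    · rcases hA 1 h1 with h | ⟨-, hm⟩
      · norm_num at h
      rw [hm, hmul] at *
    · have : ¬ (A.charpoly).IsRoot 1 := by
        intro hr
        apply h1
        have : (charpolyC A).eval 1 = algebraMap ℝ ℂ ((A.charpoly).eval 1) := by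
          rw [charpolyC, eval_one_map]
        simp [IsRoot, this, hr.eq_zero]
      simp [rootMultiplicity_eq_zero this]
  have hGen : LinearMap.ker φ = Module.End.maxGenEigenspace φ 0 :=
    Submodule.eq_of_le_of_finrank_le hle hfin
  have hinf : LinearMap.range φ ⊓ LinearMap.ker φ = ⊥ := by
    rw [eq_bot_iff]
    rintro x ⟨⟨y, rfl⟩, hxk⟩
    have hy : y ∈ Module.End.maxGenEigenspace φ 0 := by
      rw [Module.End.mem_maxGenEigenspace]
      refine ⟨2, by simpa [pow_two] using hxk⟩
    rw [← hGen] at hy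
    simpa using hy
  refine ⟨?_, hinf⟩
  have hsum := Submodule.finrank_sup_add_finrank_inf_eq
    (LinearMap.range φ) (LinearMap.ker φ)
  rw [hinf] at hsum
  simp only [finrank_bot, add_zero] at hsum
  apply Submodule.eq_top_of_finrank_eq
  rw [hsum, LinearMap.finrank_range_add_finrank_ker]
end

section
/- Let A ∈ ℝ^{n×n} be semi-Schur and B ∈ ℝ^{n×m} satisfy ran(B) ⊆ ran(A − I). Let w : ℕ → ℝ^m, let x_0 ∈ ℝ^n, and let x : ℕ → ℝ^n be defined by x(0) = x_0 and x(k+1) = A x(k) + B w(k). Let x* be the oblique projection of x_0 onto ker(A − I) along ran(A − I). Then there exist constants c_1, c_2, c_3 > 0 (independent of x_0 and w) such that for all k ∈ ℕ: ‖x(k) − x*‖ ≤ c_1 e^{−c_2 k} ‖x_0 − x*‖ + c_3 · max_{l∈ℕ, l ≤ k} ‖w(l)‖. -/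
open Matrix Polynomial Filter
open scoped ENNReal NNReal

section AuxAnalysis

lemma aux_pow_decay {E : Type*} [NormedAddCommGroup E] [NormedSpace ℂ E]
    [FiniteDimensional ℂ E] (f : E →L[ℂ] E)
    (h : ∀ μ ∈ spectrum ℂ f, ‖μ‖₊ < 1) :
    ∃ C > (0:ℝ), ∃ r : ℝ, 0 < r ∧ r < 1 ∧ ∀ k : ℕ, ‖f ^ k‖ ≤ C * r ^ k := by
  rcases subsingleton_or_nontrivial E with hE | hE
  · refine ⟨1, one_pos, 1/2, by norm_num, by norm_num, fun k => ?_⟩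
    have h0 : f ^ k = 0 := Subsingleton.elim _ _
    rw [h0]
    simp only [norm_zero]
    positivity
  · have : CompleteSpace E := FiniteDimensional.complete ℂ E
    have hnt : Nontrivial (E →L[ℂ] E) := by
      obtain ⟨x, hx⟩ := exists_ne (0 : E)
      exact ⟨1, 0, fun hc => hx (by simpa using DFunLike.congr_fun hc x)⟩
    have hsp : spectralRadius ℂ f < 1 := by
      have := spectrum.spectralRadius_lt_of_forall_lt (a := f) (r := 1) h
      simpa using this
    obtain ⟨r, hr1, hr2⟩ := ENNReal.lt_iff_exists_nnreal_btwn.mp hsp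
    have hrpos : (0:ℝ) < r := by
      rcases eq_or_lt_of_le (zero_le : (0:ℝ≥0) ≤ r) with h0 | h0
      · exfalso; rw [← h0] at hr1; simp at hr1
      · exact_mod_cast h0
    have hrlt : (r:ℝ) < 1 := by exact_mod_cast (ENNReal.coe_lt_one_iff.mp hr2)
    have hgel := spectrum.pow_nnnorm_pow_one_div_tendsto_nhds_spectralRadius f
    have hev : ∀ᶠ k : ℕ in atTop, ((‖f ^ k‖₊ : ℝ≥0∞) ^ (1 / (k:ℝ))) < (r : ℝ≥0∞) :=
      hgel.eventually_lt_const hr1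
    obtain ⟨N, hN⟩ := hev.exists_forall_of_atTop
    have key : ∀ k : ℕ, N ≤ k → 1 ≤ k → ‖f ^ k‖ ≤ (r:ℝ) ^ k := by
      intro k hk hk1
      have h1 := (hN k hk).le
      have h2 : ((‖f ^ k‖₊ : ℝ≥0∞) ^ (1 / (k:ℝ))) ^ (k:ℝ) ≤ (r : ℝ≥0∞) ^ (k:ℝ) :=
        ENNReal.rpow_le_rpow h1 (by positivity)
      rw [← ENNReal.rpow_mul, one_div,
        inv_mul_cancel₀ (Nat.cast_ne_zero.mpr (by omega) : (k:ℝ) ≠ 0),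
        ENNReal.rpow_one, ENNReal.rpow_natCast, ← ENNReal.coe_pow, ENNReal.coe_le_coe] at h2
      calc ‖f ^ k‖ = ((‖f ^ k‖₊ : ℝ≥0) : ℝ) := rfl
        _ ≤ ((r ^ k : ℝ≥0) : ℝ) := by exact_mod_cast h2
        _ = (r:ℝ) ^ k := by push_cast; ring
    set C : ℝ := 1 + ∑ j ∈ Finset.range (N + 1), ‖f ^ j‖ / (r:ℝ) ^ j with hC
    have hsum : (0:ℝ) ≤ ∑ j ∈ Finset.range (N + 1), ‖f ^ j‖ / (r:ℝ) ^ j :=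
      Finset.sum_nonneg fun j _ => by positivity
    have hC1 : 1 ≤ C := by rw [hC]; linarith
    have hCpos : 0 < C := lt_of_lt_of_le one_pos hC1
    refine ⟨C, hCpos, r, hrpos, hrlt, fun k => ?_⟩
    rcases le_or_gt (N + 1) k with hk | hk
    · have hb := key k (by omega) (by omega)
      have : (r:ℝ) ^ k ≤ C * (r:ℝ) ^ k := by
        nlinarith [pow_pos hrpos k, hC1]
      linarith
    · have hmem : k ∈ Finset.range (N + 1) := Finset.mem_range.mpr hk
      have h1 : ‖f ^ k‖ / (r:ℝ) ^ k ≤ ∑ j ∈ Finset.range (N + 1), ‖f ^ j‖ / (r:ℝ) ^ j :=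
        Finset.single_le_sum (f := fun j => ‖f ^ j‖ / (r:ℝ) ^ j)
          (fun j _ => by positivity) hmem
      have h2 : ‖f ^ k‖ / (r:ℝ) ^ k ≤ C := by rw [hC]; linarith
      have h3 := (div_le_iff₀ (pow_pos hrpos k)).mp h2
      linarith

lemma aux_spectrum_subset {E : Type*} [NormedAddCommGroup E] [NormedSpace ℂ E]
    [FiniteDimensional ℂ E] (f : E →ₗ[ℂ] E) :
    spectrum ℂ (LinearMap.toContinuousLinearMap f) ⊆ spectrum ℂ f := by
  intro μ hμ
  by_contra hc
  rw [spectrum.notMem_iff] at hc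
  refine (spectrum.notMem_iff.mpr ?_) hμ
  obtain ⟨u, hu⟩ := hc
  have hval : LinearMap.toContinuousLinearMap (↑u : Module.End ℂ E)
      = algebraMap ℂ (E →L[ℂ] E) μ - LinearMap.toContinuousLinearMap f := by
    ext x
    simp [hu, Algebra.algebraMap_eq_smul_one]
  refine ⟨⟨LinearMap.toContinuousLinearMap (↑u : Module.End ℂ E),
    LinearMap.toContinuousLinearMap (↑u⁻¹ : Module.End ℂ E), ?_, ?_⟩, hval⟩
  · ext x
    simp only [ContinuousLinearMap.mul_apply, ContinuousLinearMap.one_apply,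
      LinearMap.coe_toContinuousLinearMap']
    rw [← Module.End.mul_apply, u.mul_inv, Module.End.one_apply]
  · ext x
    simp only [ContinuousLinearMap.mul_apply, ContinuousLinearMap.one_apply,
      LinearMap.coe_toContinuousLinearMap']
    rw [← Module.End.mul_apply, u.inv_mul, Module.End.one_apply]

end AuxAnalysis


section AuxAlgebra

lemma aux_charpoly_mulVecLin {n : ℕ} {K : Type*} [Field K] (M : Matrix (Fin n) (Fin n) K) :
    LinearMap.charpoly M.mulVecLin = M.charpoly := by
  rw [← LinearMap.charpoly_toMatrix M.mulVecLin (Pi.basisFun K (Fin n)),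
    LinearMap.toMatrix_eq_toMatrix', ← Matrix.toLin'_apply' M, LinearMap.toMatrix'_toLin']

lemma aux_eig_isRoot {n : ℕ} {K : Type*} [Field K] (M : Matrix (Fin n) (Fin n) K) (μ : K)
    (h : Module.End.HasEigenvalue M.mulVecLin μ) : M.charpoly.IsRoot μ := by
  have h1 : (minpoly K (M.mulVecLin : Module.End K (Fin n → K))).IsRoot μ :=
    Module.End.hasEigenvalue_iff_isRoot.mp h
  have h2 := LinearMap.minpoly_dvd_charpoly (M.mulVecLin : Module.End K (Fin n → K))
  rw [aux_charpoly_mulVecLin] at h2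
  exact h1.dvd h2

lemma aux_charpoly_shift {n : ℕ} {K : Type*} [Field K] (A : Matrix (Fin n) (Fin n) K) :
    (A - 1).charpoly = (A.charpoly).comp (X + C 1) := by
  have hcomp : (A.charpoly).comp (X + C 1) = (aeval (X + C 1 : K[X])) A.charpoly := by
    rw [aeval_def, Polynomial.algebraMap_eq]; rfl
  rw [hcomp, Matrix.charpoly, Matrix.charpoly,
    show ((aeval (X + C 1 : K[X])) (charmatrix A).det)
      = (aeval (X + C 1 : K[X])).toRingHom (charmatrix A).det from rfl,
    RingHom.map_det (aeval (X + C 1 : K[X])).toRingHom (charmatrix A)]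
  congr 1
  ext i j
  simp only [RingHom.mapMatrix_apply, Matrix.map_apply, AlgHom.toRingHom_eq_coe,
    AlgHom.coe_toRingHom]
  by_cases hij : i = j
  · subst hij
    simp [charmatrix_apply_eq, Matrix.sub_apply, Matrix.one_apply_eq, map_sub, aeval_X, aeval_C]
    ring
  · simp [charmatrix_apply_ne _ _ _ hij, Matrix.sub_apply, Matrix.one_apply_ne hij, aeval_C]

lemma aux_root_iff {n : ℕ} (A : Matrix (Fin n) (Fin n) ℝ) (μ : ℝ) :
    (charpolyC A).IsRoot (algebraMap ℝ ℂ μ) ↔ A.charpoly.IsRoot μ := by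
  unfold charpolyC
  rw [IsRoot, IsRoot, Polynomial.eval_map, Polynomial.eval₂_at_apply,
    map_eq_zero_iff _ (algebraMap ℝ ℂ).injective]

lemma aux_ker_sq {n : ℕ} (A : Matrix (Fin n) (Fin n) ℝ) (hA : IsSemiSchur A) :
    ∀ v : Fin n → ℝ, (A - 1).mulVec ((A - 1).mulVec v) = 0 → (A - 1).mulVec v = 0 := by
  set L : Module.End ℝ (Fin n → ℝ) := (A - 1).mulVecLin with hL
  have key : ∀ w : Fin n → ℝ, L w = 0 → w ≠ 0 → A.charpoly.IsRoot 1 := by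
    intro w hw hw0
    have hAw : A.mulVecLin w = (1:ℝ) • w := by
      have h : (A - 1) *ᵥ w = 0 := hw
      rw [Matrix.sub_mulVec, Matrix.one_mulVec, sub_eq_zero] at h
      simpa [Matrix.mulVecLin_apply] using h
    have hev : Module.End.HasEigenvalue A.mulVecLin 1 :=
      Module.End.hasEigenvalue_of_hasEigenvector ⟨Module.End.mem_eigenspace_iff.mpr hAw, hw0⟩
    exact aux_eig_isRoot A 1 hev
  by_cases hroot : (charpolyC A).IsRoot 1
  · have hdim := ((hA 1 hroot).resolve_left (by simp)).2
    have h1 : (charpolyC A).rootMultiplicity 1 = A.charpoly.rootMultiplicity 1 := by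
      unfold charpolyC
      rw [show (1:ℂ) = algebraMap ℝ ℂ 1 from (_root_.map_one _).symm,
        Polynomial.eq_rootMultiplicity_map (algebraMap ℝ ℂ).injective]
    have h2 : A.charpoly.rootMultiplicity 1 = (A - 1).charpoly.natTrailingDegree := by
      rw [Polynomial.rootMultiplicity_eq_natTrailingDegree, aux_charpoly_shift]
    have h3 := LinearMap.finrank_maxGenEigenspace_zero_eq L
    rw [aux_charpoly_mulVecLin] at h3
    have hle : LinearMap.ker L ≤ Module.End.maxGenEigenspace L 0 := by
      intro v hv
      rw [Module.End.mem_maxGenEigenspace]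
      exact ⟨1, by simpa using hv⟩
    have heq : LinearMap.ker L = Module.End.maxGenEigenspace L 0 := by
      apply Submodule.eq_of_le_of_finrank_le hle
      rw [h3, hdim, h1, h2]
    intro v hv
    have hv2 : v ∈ Module.End.maxGenEigenspace L 0 := by
      rw [Module.End.mem_maxGenEigenspace]
      exact ⟨2, by simpa [pow_succ, Module.End.mul_apply, hL, Matrix.mulVecLin_apply, -Matrix.mulVec_mulVec,
        Matrix.sub_mulVec, Matrix.mulVec_sub] using hv⟩
    rw [← heq] at hv2
    exact hv2
  · intro v hv
    by_contra hne
    have := key ((A - 1).mulVec v) hv hne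
    rw [← aux_root_iff A 1, _root_.map_one] at this
    exact hroot this

end AuxAlgebra

noncomputable section Complexify

variable {n : ℕ}

def ιc {n : ℕ} (v : Fin n → ℝ) : Fin n → ℂ := fun i => (v i : ℂ)

lemma aux_iota_norm (v : Fin n → ℝ) : ‖ιc v‖ = ‖v‖ := by
  rw [Pi.norm_def, Pi.norm_def]
  congr 1
  apply Finset.sup_congr rfl
  intro i _
  simp [ιc]

lemma aux_iota_mulVec (M : Matrix (Fin n) (Fin n) ℝ) (v : Fin n → ℝ) :
    (M.map (algebraMap ℝ ℂ)) *ᵥ (ιc v) = ιc (M *ᵥ v) := by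
  funext i
  exact (RingHom.map_mulVec (algebraMap ℝ ℂ) M v i).symm

lemma aux_map_sub_one (A : Matrix (Fin n) (Fin n) ℝ) :
    (A - 1).map (algebraMap ℝ ℂ) = A.map (algebraMap ℝ ℂ) - 1 := by
  ext i j
  by_cases hij : i = j <;>
    simp [Matrix.map_apply, Matrix.sub_apply, Matrix.one_apply, hij]

lemma aux_decomp (u : Fin n → ℂ) :
    u = ιc (fun i => (u i).re) + Complex.I • ιc (fun i => (u i).im) := by
  funext i
  simp only [Pi.add_apply, Pi.smul_apply, smul_eq_mul, ιc]
  apply Complex.ext <;> simp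

lemma aux_iota_eq_zero {a b : Fin n → ℝ}
    (h : ιc a + Complex.I • ιc b = 0) : a = 0 ∧ b = 0 := by
  constructor <;> funext i <;>
  · have hi := congrFun h i
    simp only [Pi.add_apply, Pi.smul_apply, smul_eq_mul, Pi.zero_apply, ιc] at hi
    rw [Complex.ext_iff] at hi
    simp at hi
    simp [hi]

lemma aux_ker_sq_c (A : Matrix (Fin n) (Fin n) ℝ) (hA : IsSemiSchur A) :
    ∀ u : Fin n → ℂ,
      ((A - 1).map (algebraMap ℝ ℂ)) *ᵥ (((A - 1).map (algebraMap ℝ ℂ)) *ᵥ u) = 0 →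
      ((A - 1).map (algebraMap ℝ ℂ)) *ᵥ u = 0 := by
  set Lc := (A - 1).map (algebraMap ℝ ℂ) with hLc
  intro u hu
  set a : Fin n → ℝ := fun i => (u i).re
  set b : Fin n → ℝ := fun i => (u i).im
  have hdec : u = ιc a + Complex.I • ιc b := aux_decomp u
  have h1 : Lc *ᵥ u = ιc ((A - 1) *ᵥ a) + Complex.I • ιc ((A - 1) *ᵥ b) := by
    rw [hdec, Matrix.mulVec_add, Matrix.mulVec_smul, aux_iota_mulVec, aux_iota_mulVec]
  have h2 : Lc *ᵥ (Lc *ᵥ u)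
      = ιc ((A - 1) *ᵥ ((A - 1) *ᵥ a)) + Complex.I • ιc ((A - 1) *ᵥ ((A - 1) *ᵥ b)) := by
    rw [h1, Matrix.mulVec_add, Matrix.mulVec_smul, aux_iota_mulVec, aux_iota_mulVec]
  rw [h2] at hu
  obtain ⟨ha, hb⟩ := aux_iota_eq_zero hu
  rw [h1, aux_ker_sq A hA a ha, aux_ker_sq A hA b hb]
  have hz0 : (ιc (0 : Fin n → ℝ)) = 0 := by funext i; simp [ιc]
  rw [hz0]
  simp

lemma aux_real_decay (A : Matrix (Fin n) (Fin n) ℝ) (hA : IsSemiSchur A) :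
    ∃ C > (0:ℝ), ∃ r : ℝ, 0 < r ∧ r < 1 ∧ ∀ (k : ℕ) (v : Fin n → ℝ),
      v ∈ LinearMap.range (A - 1).mulVecLin → ‖(A ^ k) *ᵥ v‖ ≤ C * r ^ k * ‖v‖ := by
  set f := algebraMap ℝ ℂ
  set Ac := A.map f with hAc
  have hLc : (A - 1).map f = Ac - 1 := aux_map_sub_one A
  set E := LinearMap.range (Ac - 1).mulVecLin with hE
  have hinv : ∀ x ∈ E, Ac.mulVecLin x ∈ E := by
    rintro x ⟨z, rfl⟩
    refine ⟨Ac.mulVecLin z, ?_⟩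
    simp only [Matrix.mulVecLin_apply, Matrix.mulVec_mulVec]
    rw [show (Ac - 1) * Ac = Ac * (Ac - 1) by
      rw [mul_sub, sub_mul, mul_one, one_mul]]
  set g : E →ₗ[ℂ] E := (Ac.mulVecLin).restrict hinv with hg
  set g' := LinearMap.toContinuousLinearMap g with hg'
  have hspec : ∀ μ ∈ spectrum ℂ g', ‖μ‖₊ < 1 := by
    intro μ hμ
    have hμ2 : μ ∈ spectrum ℂ g := aux_spectrum_subset g hμ
    have hev : Module.End.HasEigenvalue g μ :=
      Module.End.HasEigenvalue.of_mem_spectrum hμ2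
    obtain ⟨v, hv⟩ := hev.exists_hasEigenvector
    have hgv : (Ac.mulVecLin) (v : Fin n → ℂ) = μ • (v : Fin n → ℂ) := by
      have h0 : g v = μ • v := Module.End.mem_eigenspace_iff.mp hv.1
      have h1 : ((g v : E) : Fin n → ℂ) = Ac.mulVecLin (v : Fin n → ℂ) :=
        LinearMap.restrict_coe_apply _ _ _
      rw [← h1, h0]
      rfl
    have hv1 : (v : Fin n → ℂ) ≠ 0 := fun hc => hv.2 (by
      apply Subtype.coe_injective
      simpa using hc)
    have hevA : Module.End.HasEigenvalue Ac.mulVecLin μ :=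
      Module.End.hasEigenvalue_of_hasEigenvector
        ⟨Module.End.mem_eigenspace_iff.mpr hgv, hv1⟩
    have hroot : (charpolyC A).IsRoot μ := by
      have := aux_eig_isRoot Ac μ hevA
      rwa [hAc, Matrix.charpoly_map] at this
    rcases hA μ hroot with h | ⟨h1, _⟩
    · have : ‖μ‖ < 1 := by exact h
      exact_mod_cast this
    · exfalso
      subst h1
      have hker : (Ac - 1) *ᵥ (v : Fin n → ℂ) = 0 := by
        rw [Matrix.sub_mulVec, Matrix.one_mulVec, sub_eq_zero]
        simpa [Matrix.mulVecLin_apply] using hgv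
      obtain ⟨z, hz⟩ := v.2
      rw [Matrix.mulVecLin_apply] at hz
      rw [← hz] at hker
      have := aux_ker_sq_c A hA z (by rwa [hLc])
      rw [hLc, hz] at this
      exact hv1 this
  obtain ⟨C, hC, r, hr0, hr1, hbd⟩ := aux_pow_decay g' hspec
  refine ⟨C, hC, r, hr0, hr1, fun k v hv => ?_⟩
  obtain ⟨z, hz⟩ := hv
  rw [Matrix.mulVecLin_apply] at hz
  have hvE : ιc v ∈ E := by
    refine ⟨ιc z, ?_⟩
    rw [Matrix.mulVecLin_apply, ← hLc, aux_iota_mulVec, hz]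
  set xv : E := ⟨ιc v, hvE⟩ with hxv
  have hpow : ∀ k : ℕ, (((g' ^ k) xv : E) : Fin n → ℂ) = ιc ((A ^ k) *ᵥ v) := by
    intro k
    induction k with
    | zero => simp [pow_zero, Matrix.one_mulVec, hxv]
    | succ k ih =>
      have h1 : (g' ^ (k+1)) xv = g' ((g' ^ k) xv) := by
        rw [pow_succ', ContinuousLinearMap.mul_apply]
      rw [h1]
      have h2 : ((g' ((g' ^ k) xv) : E) : Fin n → ℂ)
          = Ac *ᵥ (((g' ^ k) xv : E) : Fin n → ℂ) := by
        have : g' ((g' ^ k) xv) = g ((g' ^ k) xv) := rfl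
        rw [this]
        have := LinearMap.restrict_coe_apply Ac.mulVecLin hinv ((g' ^ k) xv)
        rw [this, Matrix.mulVecLin_apply]
      rw [h2, ih, hAc, aux_iota_mulVec, Matrix.mulVec_mulVec, ← pow_succ']
  have hnorm1 : ‖(A ^ k) *ᵥ v‖ = ‖(g' ^ k) xv‖ := by
    rw [Submodule.coe_norm, hpow k, aux_iota_norm]
  have hnorm2 : ‖xv‖ = ‖v‖ := by
    rw [Submodule.coe_norm, hxv, aux_iota_norm]
  calc ‖(A ^ k) *ᵥ v‖ = ‖(g' ^ k) xv‖ := hnorm1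
    _ ≤ ‖g' ^ k‖ * ‖xv‖ := ContinuousLinearMap.le_opNorm _ _
    _ ≤ (C * r ^ k) * ‖v‖ := by
        rw [hnorm2]
        exact mul_le_mul_of_nonneg_right (hbd k) (norm_nonneg v)

end Complexify
/-- ISS-type estimate for the discrete-time LTI system `x(k+1) = A x(k) + B w(k)` with a
semi-Schur matrix `A` and `ran(B) ⊆ ran(A - I)`: the iterates converge, up to the oblique
projection `x*` of `x₀` onto `ker (A - I)` along `ran (A - I)`, exponentially with an input
gain on `max_{l ≤ k} ‖w(l)‖`. The constants are independent of `x₀` and `w`. -/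
theorem semiSchur_LTI_ISS {n m : ℕ} (A : Matrix (Fin n) (Fin n) ℝ)
    (B : Matrix (Fin n) (Fin m) ℝ)
    (hA : IsSemiSchur A)
    (hB : LinearMap.range B.mulVecLin ≤ LinearMap.range (A - 1).mulVecLin) :
    ∃ c₁ > (0:ℝ), ∃ c₂ > (0:ℝ), ∃ c₃ > (0:ℝ),
      ∀ (w : ℕ → Fin m → ℝ) (x₀ : Fin n → ℝ) (x : ℕ → Fin n → ℝ),
        x 0 = x₀ →
        (∀ k : ℕ, x (k + 1) = A.mulVec (x k) + B.mulVec (w k)) →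
        ∀ xstar : Fin n → ℝ,
          xstar ∈ LinearMap.ker (A - 1).mulVecLin →
          x₀ - xstar ∈ LinearMap.range (A - 1).mulVecLin →
          ∀ k : ℕ,
            ‖x k - xstar‖ ≤ c₁ * Real.exp (-c₂ * k) * ‖x₀ - xstar‖ +
              c₃ * (Finset.range (k + 1)).sup' Finset.nonempty_range_add_one (fun l => ‖w l‖) := by
  obtain ⟨C, hC, r, hr0, hr1, hdecay⟩ := aux_real_decay A hA
  set Bc := LinearMap.toContinuousLinearMap B.mulVecLin with hBc
  set Kb := ‖Bc‖ with hKb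
  have hKb0 : 0 ≤ Kb := norm_nonneg _
  have hlog : 0 < -Real.log r := by
    have := Real.log_neg hr0 hr1
    linarith
  have hc₃ : (0:ℝ) < C * Kb / (1 - r) + 1 := by
    have h1 : 0 ≤ C * Kb / (1 - r) :=
      div_nonneg (mul_nonneg hC.le hKb0) (by linarith)
    linarith
  refine ⟨C, hC, -Real.log r, hlog, C * Kb / (1 - r) + 1, hc₃, ?_⟩
  intro w x₀ x hx0 hrec xstar hker hran k
  have hAxstar : A *ᵥ xstar = xstar := by
    have h := hker
    rw [LinearMap.mem_ker, Matrix.mulVecLin_apply, Matrix.sub_mulVec, Matrix.one_mulVec,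
      sub_eq_zero] at h
    exact h
  set y : ℕ → (Fin n → ℝ) := fun l => x l - xstar with hy
  have hyrec : ∀ l, y (l+1) = A *ᵥ (y l) + B *ᵥ (w l) := by
    intro l
    show x (l+1) - xstar = A *ᵥ (x l - xstar) + B *ᵥ (w l)
    rw [hrec l, Matrix.mulVec_sub, hAxstar]
    abel
  have hclosed : ∀ j : ℕ, y j = (A ^ j) *ᵥ (y 0)
      + ∑ l ∈ Finset.range j, (A ^ (j - 1 - l)) *ᵥ (B *ᵥ w l) := by
    intro j
    induction j with
    | zero => simp [Matrix.one_mulVec]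
    | succ j ih =>
      rw [hyrec j, ih, Finset.sum_range_succ]
      have hsum : A *ᵥ ((A ^ j) *ᵥ (y 0) + ∑ l ∈ Finset.range j, (A ^ (j - 1 - l)) *ᵥ (B *ᵥ w l))
          = (A ^ (j+1)) *ᵥ (y 0)
            + ∑ l ∈ Finset.range j, (A ^ (j - l)) *ᵥ (B *ᵥ w l) := by
        rw [Matrix.mulVec_add]
        congr 1
        · rw [Matrix.mulVec_mulVec, ← pow_succ']
        · rw [show (A *ᵥ ∑ l ∈ Finset.range j, (A ^ (j - 1 - l)) *ᵥ (B *ᵥ w l))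
              = A.mulVecLin (∑ l ∈ Finset.range j, (A ^ (j - 1 - l)) *ᵥ (B *ᵥ w l)) from rfl,
            map_sum]
          apply Finset.sum_congr rfl
          intro l hl
          rw [Finset.mem_range] at hl
          rw [Matrix.mulVecLin_apply, Matrix.mulVec_mulVec, ← pow_succ',
            show j - 1 - l + 1 = j - l by omega]
      rw [hsum, Nat.add_sub_cancel, Nat.sub_self, pow_zero, Matrix.one_mulVec]
      abel
  -- memberships
  have hy0 : y 0 = x₀ - xstar := by
    show x 0 - xstar = x₀ - xstar
    rw [hx0]
  have hy0mem : y 0 ∈ LinearMap.range (A - 1).mulVecLin := by rw [hy0]; exact hran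
  have hBmem : ∀ l, B *ᵥ w l ∈ LinearMap.range (A - 1).mulVecLin := fun l => hB ⟨w l, rfl⟩
  set W := (Finset.range (k+1)).sup' Finset.nonempty_range_add_one (fun l => ‖w l‖) with hWdef
  have hW0 : 0 ≤ W := le_trans (norm_nonneg (w 0))
    (Finset.le_sup' (fun l => ‖w l‖) (Finset.mem_range.mpr (by omega)))
  have hWl : ∀ l, l ≤ k → ‖w l‖ ≤ W := fun l hl =>
    Finset.le_sup' (fun l => ‖w l‖) (Finset.mem_range.mpr (by omega))
  have hBw : ∀ l, ‖B *ᵥ w l‖ ≤ Kb * ‖w l‖ := by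
    intro l
    have h := Bc.le_opNorm (w l)
    have hBceq : Bc (w l) = B *ᵥ w l := by
      rw [hBc]
      simp [Matrix.mulVecLin_apply]
    rwa [hBceq] at h
  -- geometric sum bound
  have hgeom : ∑ i ∈ Finset.range k, r ^ i ≤ 1 / (1 - r) := by
    rw [le_div_iff₀ (by linarith : (0:ℝ) < 1 - r)]
    have h := geom_sum_mul r k
    have hrk : 0 ≤ r ^ k := le_of_lt (pow_pos hr0 k)
    nlinarith [h]
  -- term bounds
  have hterm : ∀ l ∈ Finset.range k, ‖(A ^ (k - 1 - l)) *ᵥ (B *ᵥ w l)‖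
      ≤ (C * Kb * W) * r ^ (k - 1 - l) := by
    intro l hl
    rw [Finset.mem_range] at hl
    have h1 := hdecay (k - 1 - l) (B *ᵥ w l) (hBmem l)
    have h2 : ‖B *ᵥ w l‖ ≤ Kb * W := by
      calc ‖B *ᵥ w l‖ ≤ Kb * ‖w l‖ := hBw l
        _ ≤ Kb * W := mul_le_mul_of_nonneg_left (hWl l (by omega)) hKb0
    calc ‖(A ^ (k - 1 - l)) *ᵥ (B *ᵥ w l)‖ ≤ C * r ^ (k - 1 - l) * ‖B *ᵥ w l‖ := h1
      _ ≤ C * r ^ (k - 1 - l) * (Kb * W) := by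
          apply mul_le_mul_of_nonneg_left h2
          exact mul_nonneg hC.le (pow_nonneg hr0.le _)
      _ = (C * Kb * W) * r ^ (k - 1 - l) := by ring
  -- sum bound
  have hsumbound : ‖∑ l ∈ Finset.range k, (A ^ (k - 1 - l)) *ᵥ (B *ᵥ w l)‖
      ≤ (C * Kb * W) * (1 / (1 - r)) := by
    calc ‖∑ l ∈ Finset.range k, (A ^ (k - 1 - l)) *ᵥ (B *ᵥ w l)‖
        ≤ ∑ l ∈ Finset.range k, ‖(A ^ (k - 1 - l)) *ᵥ (B *ᵥ w l)‖ := norm_sum_le _ _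
      _ ≤ ∑ l ∈ Finset.range k, (C * Kb * W) * r ^ (k - 1 - l) :=
          Finset.sum_le_sum hterm
      _ = (C * Kb * W) * ∑ l ∈ Finset.range k, r ^ (k - 1 - l) := by
          rw [Finset.mul_sum]
      _ = (C * Kb * W) * ∑ l ∈ Finset.range k, r ^ l := by
          congr 1
          exact Finset.sum_range_reflect (fun i => r ^ i) k
      _ ≤ (C * Kb * W) * (1 / (1 - r)) := by
          apply mul_le_mul_of_nonneg_left hgeom
          exact mul_nonneg (mul_nonneg hC.le hKb0) hW0
  -- head bound
  have hhead : ‖(A ^ k) *ᵥ (y 0)‖ ≤ C * r ^ k * ‖x₀ - xstar‖ := by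
    have h := hdecay k (y 0) hy0mem
    rw [hy0] at h
    rw [hy0]
    exact h
  -- exponential identity
  have hexp : Real.exp (-(-Real.log r) * k) = r ^ k := by
    rw [neg_neg, mul_comm, Real.exp_nat_mul, Real.exp_log hr0]
  -- final
  have hfinal : ‖y k‖ ≤ C * r ^ k * ‖x₀ - xstar‖ + (C * Kb * W) * (1 / (1 - r)) := by
    rw [hclosed k]
    calc ‖(A ^ k) *ᵥ (y 0) + ∑ l ∈ Finset.range k, (A ^ (k - 1 - l)) *ᵥ (B *ᵥ w l)‖
        ≤ ‖(A ^ k) *ᵥ (y 0)‖ + ‖∑ l ∈ Finset.range k, (A ^ (k - 1 - l)) *ᵥ (B *ᵥ w l)‖ :=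
          norm_add_le _ _
      _ ≤ C * r ^ k * ‖x₀ - xstar‖ + (C * Kb * W) * (1 / (1 - r)) :=
          add_le_add hhead hsumbound
  show ‖y k‖ ≤ _
  rw [hexp]
  have hlast : (C * Kb * W) * (1 / (1 - r)) ≤ (C * Kb / (1 - r) + 1) * W := by
    have h1 : (C * Kb * W) * (1 / (1 - r)) = (C * Kb / (1 - r)) * W := by ring
    have h2 : (C * Kb / (1 - r)) * W ≤ (C * Kb / (1 - r) + 1) * W := by
      apply mul_le_mul_of_nonneg_right _ hW0
      linarith
    linarith [h1 ▸ le_refl ((C * Kb * W) * (1 / (1 - r)))]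
  linarith
end

section
/- Let A ∈ ℝ^{n×n} be semi-Schur, let x_0 ∈ ℝ^n, and let x(k) = A^k x_0. Let x* be the oblique projection of x_0 onto ker(A − I) along ran(A − I). Then x(k) converges to x* exponentially fast: there exist C > 0 and c > 0 such that ‖A^k x_0 − x*‖ ≤ C e^{−c k} for all k ∈ ℕ. -/
open Matrix Polynomial

section Auxiliary

open Module

lemma mulVecLin_pow' {N : ℕ} {R : Type*} [CommRing R] (M : Matrix (Fin N) (Fin N) R) (k : ℕ) :
    (M ^ k).mulVecLin = M.mulVecLin ^ k := by
  induction k with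
  | zero => simp [Matrix.mulVecLin_one]; rfl
  | succ k ih => rw [pow_succ, pow_succ, Matrix.mulVecLin_mul, ih]; rfl

lemma mulVec_map' {N : ℕ} (M : Matrix (Fin N) (Fin N) ℝ) (v : Fin N → ℝ) :
    (M.map (algebraMap ℝ ℂ)).mulVec (fun i => (v i : ℂ)) = fun i => ((M.mulVec v) i : ℂ) := by
  ext i
  simp [Matrix.mulVec, dotProduct, Matrix.map_apply]

lemma norm_complexify {N : ℕ} (x : Fin N → ℝ) :
    ‖(fun i => (x i : ℂ))‖ = ‖x‖ := by
  simp only [Pi.norm_def]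
  congr 1
  apply Finset.sup_congr rfl
  intro i _
  simp [Complex.nnnorm_real]

lemma charpoly_mulVecLin' {N : ℕ} (M : Matrix (Fin N) (Fin N) ℂ) :
    LinearMap.charpoly M.mulVecLin = M.charpoly := by
  rw [← LinearMap.charpoly_toMatrix M.mulVecLin (Pi.basisFun ℂ (Fin N)),
    LinearMap.toMatrix_eq_toMatrix', ← Matrix.toLin'_apply', LinearMap.toMatrix'_toLin']

lemma mulVec_map_re {N : ℕ} (M : Matrix (Fin N) (Fin N) ℝ) (v : Fin N → ℂ) :
    M.mulVec (fun i => (v i).re) = fun i => ((M.map (algebraMap ℝ ℂ)).mulVec v i).re := by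
  ext i
  simp [Matrix.mulVec, dotProduct, Matrix.map_apply, Complex.re_sum]

lemma mulVec_map_im {N : ℕ} (M : Matrix (Fin N) (Fin N) ℝ) (v : Fin N → ℂ) :
    M.mulVec (fun i => (v i).im) = fun i => ((M.map (algebraMap ℝ ℂ)).mulVec v i).im := by
  ext i
  simp [Matrix.mulVec, dotProduct, Matrix.map_apply, Complex.im_sum]

lemma finrank_ker_map {N : ℕ} (M : Matrix (Fin N) (Fin N) ℝ) :
    finrank ℂ (LinearMap.ker (M.map (algebraMap ℝ ℂ)).mulVecLin)
      = finrank ℝ (LinearMap.ker M.mulVecLin) := by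
  set Kc := LinearMap.ker (M.map (algebraMap ℝ ℂ)).mulVecLin with hKc
  set Kr := LinearMap.ker M.mulVecLin with hKr
  have hmemc : ∀ v : Fin N → ℂ, v ∈ Kc ↔ (M.map (algebraMap ℝ ℂ)).mulVec v = 0 := fun v => by
    simp [hKc, LinearMap.mem_ker]
  have hmemr : ∀ v : Fin N → ℝ, v ∈ Kr ↔ M.mulVec v = 0 := fun v => by
    simp [hKr, LinearMap.mem_ker]
  have hre : ∀ v ∈ Kc, (fun i => (v i).re) ∈ Kr := by
    intro v hv
    rw [hmemr, mulVec_map_re, (hmemc v).mp hv]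
    ext i; simp
  have him : ∀ v ∈ Kc, (fun i => (v i).im) ∈ Kr := by
    intro v hv
    rw [hmemr, mulVec_map_im, (hmemc v).mp hv]
    ext i; simp
  have hinv : ∀ (a b : Fin N → ℝ), a ∈ Kr → b ∈ Kr →
      (fun i => (a i : ℂ) + (b i : ℂ) * Complex.I) ∈ Kc := by
    intro a b ha hb
    rw [hmemc]
    have : (fun i => (a i : ℂ) + (b i : ℂ) * Complex.I)
        = (fun i => (a i : ℂ)) + Complex.I • (fun i => (b i : ℂ)) := by
      ext i; simp [mul_comm]
    rw [this, Matrix.mulVec_add, Matrix.mulVec_smul, mulVec_map', mulVec_map',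
      (hmemr a).mp ha, (hmemr b).mp hb]
    ext i; simp
  let e : Kc ≃ₗ[ℝ] Kr × Kr :=
    { toFun := fun v => (⟨fun i => ((v : Fin N → ℂ) i).re, hre _ v.2⟩,
        ⟨fun i => ((v : Fin N → ℂ) i).im, him _ v.2⟩)
      map_add' := by
        intro v w
        ext i <;> simp
      map_smul' := by
        intro r v
        ext i <;> simp [Complex.real_smul]
      invFun := fun p => ⟨fun i => (p.1.1 i : ℂ) + (p.2.1 i : ℂ) * Complex.I,
        hinv _ _ p.1.2 p.2.2⟩
      left_inv := by
        intro v
        ext i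
        simp [Complex.re_add_im]
      right_inv := by
        intro p
        ext i <;> simp }
  have h1 : finrank ℝ Kc = finrank ℝ (Kr × Kr) := e.finrank_eq
  have h2 : finrank ℝ (Kr × Kr) = finrank ℝ Kr + finrank ℝ Kr := Module.finrank_prod
  have h3 : finrank ℝ ℂ * finrank ℂ Kc = finrank ℝ Kc := Module.finrank_mul_finrank ℝ ℂ Kc
  rw [Complex.finrank_real_complex] at h3
  omega

lemma nat_mul_pow_le_tsum {t : ℝ} (ht0 : 0 ≤ t) (ht1 : t < 1) (k : ℕ) :
    (k : ℝ) * t ^ k ≤ ∑' j : ℕ, (j : ℝ) * t ^ j := by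
  have hsum : Summable (fun j : ℕ => (j : ℝ) * t ^ j) := by
    have := summable_pow_mul_geometric_of_norm_lt_one 1 (r := t) (by
      rw [Real.norm_eq_abs, abs_of_nonneg ht0]; exact ht1)
    simpa using this
  exact hsum.le_tsum k (fun j _ => by positivity)

lemma decay_lemma {N : ℕ} (φ : Module.End ℂ (Fin N → ℂ)) (s : Multiset ℂ)
    (hs : ∀ μ ∈ s, ‖μ‖ < 1) :
    ∀ v : Fin N → ℂ, (Polynomial.aeval φ (s.map fun μ => X - C μ).prod) v = 0 →
      ∃ r C : ℝ, 0 < r ∧ r < 1 ∧ ∀ k : ℕ, ‖(φ ^ k) v‖ ≤ C * r ^ k := by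
  induction s using Multiset.induction with
  | empty =>
    intro v hv
    simp only [Multiset.map_zero, Multiset.prod_zero, _root_.map_one,
      Module.End.one_apply] at hv
    exact ⟨1/2, 1, by norm_num, by norm_num, fun k => by
      simp only [hv, map_zero, norm_zero]; positivity⟩
  | cons μ s ih =>
    intro v hv
    have hμ : ‖μ‖ < 1 := hs μ (Multiset.mem_cons_self _ _)
    have hs' : ∀ x ∈ s, ‖x‖ < 1 := fun x hx => hs x (Multiset.mem_cons_of_mem hx)
    set w := φ v - μ • v with hw
    have hw0 : (Polynomial.aeval φ (s.map fun μ => X - C μ).prod) w = 0 := by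
      have hprod : (Multiset.map (fun μ => X - C μ) (μ ::ₘ s)).prod
          = (s.map fun μ => X - C μ).prod * (X - C μ) := by
        rw [Multiset.map_cons, Multiset.prod_cons, mul_comm]
      rw [hprod, _root_.map_mul] at hv
      simpa [Module.End.mul_apply, hw, Module.algebraMap_end_apply] using hv
    obtain ⟨r, Cw, hr0, hr1, hC⟩ := ih hs' w hw0
    have hC0 : 0 ≤ Cw := le_trans (norm_nonneg w) (by simpa using hC 0)
    set r₁ := max r ‖μ‖ with hr₁
    have hr₁0 : 0 < r₁ := lt_of_lt_of_le hr0 (le_max_left _ _)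
    have hr₁1 : r₁ < 1 := max_lt hr1 hμ
    have key : ∀ k, (φ ^ k) v
        = μ ^ k • v + ∑ j ∈ Finset.range k, μ ^ (k - 1 - j) • (φ ^ j) w := by
      intro k
      induction k with
      | zero => simp
      | succ k ihk =>
        have hφv : φ v = μ • v + w := by rw [hw]; abel
        have hterm : ∀ j ∈ Finset.range k,
            φ (μ ^ (k - 1 - j) • (φ ^ j) w) = μ ^ (k - (j + 1)) • (φ ^ (j + 1)) w := by
          intro j hj
          rw [_root_.map_smul, ← Module.End.mul_apply, ← pow_succ']
          congr 2
          omega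
        rw [pow_succ', Module.End.mul_apply, ihk, _root_.map_add, _root_.map_smul, map_sum,
          Finset.sum_congr rfl hterm, hφv, Finset.sum_range_succ']
        simp only [smul_add, smul_smul, ← pow_succ, pow_zero, Module.End.one_apply,
          Nat.add_sub_cancel, Nat.sub_zero]
        abel
    have hbound : ∀ k : ℕ, ‖(φ ^ k) v‖ ≤ ‖v‖ * r₁ ^ k + Cw * (k * r₁ ^ (k - 1)) := by
      intro k
      rw [key k]
      refine le_trans (norm_add_le _ _) ?_
      have h1 : ‖μ ^ k • v‖ ≤ ‖v‖ * r₁ ^ k := by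
        rw [norm_smul, norm_pow]
        have : ‖μ‖ ^ k ≤ r₁ ^ k := pow_le_pow_left₀ (norm_nonneg μ) (le_max_right _ _) k
        nlinarith [norm_nonneg v, pow_nonneg (norm_nonneg μ) k]
      have h2 : ‖∑ j ∈ Finset.range k, μ ^ (k - 1 - j) • (φ ^ j) w‖
          ≤ Cw * (k * r₁ ^ (k - 1)) := by
        refine le_trans (norm_sum_le _ _) ?_
        have hterm : ∀ j ∈ Finset.range k,
            ‖μ ^ (k - 1 - j) • (φ ^ j) w‖ ≤ Cw * r₁ ^ (k - 1) := by
          intro j hj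
          rw [Finset.mem_range] at hj
          rw [norm_smul, norm_pow]
          have e1 : ‖μ‖ ^ (k - 1 - j) ≤ r₁ ^ (k - 1 - j) :=
            pow_le_pow_left₀ (norm_nonneg μ) (le_max_right _ _) _
          have e2 : ‖(φ ^ j) w‖ ≤ Cw * r ^ j := hC j
          have e3 : r ^ j ≤ r₁ ^ j := pow_le_pow_left₀ (le_of_lt hr0) (le_max_left _ _) j
          have e4 : r₁ ^ (k - 1 - j) * r₁ ^ j = r₁ ^ (k - 1) := by
            rw [← pow_add]; congr 1; omega
          calc ‖μ‖ ^ (k - 1 - j) * ‖(φ ^ j) w‖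
              ≤ r₁ ^ (k - 1 - j) * (Cw * r₁ ^ j) := by
                have := pow_nonneg (norm_nonneg μ) (k - 1 - j)
                have h5 : ‖(φ ^ j) w‖ ≤ Cw * r₁ ^ j := le_trans e2 (by nlinarith)
                nlinarith [norm_nonneg ((φ ^ j) w), pow_nonneg (le_of_lt hr₁0) (k-1-j),
                  pow_nonneg (le_of_lt hr₁0) j]
            _ = Cw * r₁ ^ (k - 1) := by rw [mul_comm (Cw) _, ← mul_assoc, e4, mul_comm]
        refine le_trans (Finset.sum_le_sum hterm) ?_
        rw [Finset.sum_const, Finset.card_range, nsmul_eq_mul]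
        ring_nf
        exact le_refl _
      exact add_le_add h1 h2
    set r₂ := (1 + r₁) / 2 with hr₂
    have hr₂0 : 0 < r₂ := by positivity
    have hr₂1 : r₂ < 1 := by rw [hr₂]; linarith
    have hr₁₂ : r₁ < r₂ := by rw [hr₂]; linarith
    set t := r₁ / r₂ with hts
    have ht0 : 0 ≤ t := by positivity
    have ht1 : t < 1 := by rw [hts, div_lt_one hr₂0]; exact hr₁₂
    set S := ∑' j : ℕ, (j : ℝ) * t ^ j with hS
    have hS0 : 0 ≤ S := tsum_nonneg (fun j => by positivity)
    have hgeo : ∀ k : ℕ, (k : ℝ) * r₁ ^ (k - 1) ≤ (S / r₁) * r₂ ^ k := by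
      intro k
      have h1 : (k : ℝ) * r₁ ^ (k - 1) ≤ (k : ℝ) * r₁ ^ k / r₁ := by
        cases k with
        | zero => simp
        | succ k =>
          simp only [Nat.add_sub_cancel]
          rw [pow_succ, mul_div_assoc, mul_div_cancel_right₀ _ (ne_of_gt hr₁0)]
      have h2 : r₁ ^ k = t ^ k * r₂ ^ k := by
        rw [hts, div_pow, div_mul_cancel₀]
        exact ne_of_gt (pow_pos hr₂0 k)
      have h3 : (k : ℝ) * t ^ k ≤ S := nat_mul_pow_le_tsum ht0 ht1 k
      calc (k : ℝ) * r₁ ^ (k - 1) ≤ (k : ℝ) * r₁ ^ k / r₁ := h1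
        _ = ((k : ℝ) * t ^ k) * r₂ ^ k / r₁ := by rw [h2]; ring
        _ ≤ S * r₂ ^ k / r₁ := by gcongr
        _ = (S / r₁) * r₂ ^ k := by ring
    refine ⟨r₂, ‖v‖ + Cw * (S / r₁), hr₂0, hr₂1, fun k => ?_⟩
    have h4 : r₁ ^ k ≤ r₂ ^ k := pow_le_pow_left₀ (le_of_lt hr₁0) (le_of_lt hr₁₂) k
    calc ‖(φ ^ k) v‖ ≤ ‖v‖ * r₁ ^ k + Cw * ((k : ℝ) * r₁ ^ (k - 1)) := hbound k
      _ ≤ ‖v‖ * r₂ ^ k + Cw * ((S / r₁) * r₂ ^ k) := by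
          have := hgeo k
          have h5 : (0:ℝ) ≤ (k : ℝ) * r₁ ^ (k-1) := by positivity
          nlinarith [norm_nonneg v, pow_nonneg (le_of_lt hr₂0) k]
      _ = (‖v‖ + Cw * (S / r₁)) * r₂ ^ k := by ring

lemma charpoly_shift {N : ℕ} (B : Matrix (Fin N) (Fin N) ℂ) :
    (B - 1).charpoly = B.charpoly.comp (X + C 1) := by
  let g : ℂ[X] →+* ℂ[X] := eval₂RingHom C (X + C 1)
  have hg : B.charpoly.comp (X + C 1) = g B.charpoly := rfl
  rw [hg, Matrix.charpoly, Matrix.charpoly, RingHom.map_det]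
  congr 1
  apply Matrix.ext
  intro i j
  rw [RingHom.mapMatrix_apply]
  by_cases h : i = j
  · subst h
    rw [Matrix.map_apply, charmatrix_apply_eq, charmatrix_apply_eq]
    simp only [g, coe_eval₂RingHom, eval₂_sub, eval₂_X, eval₂_C, Matrix.sub_apply,
      Matrix.one_apply_eq, map_sub, _root_.map_one]
    ring
  · rw [Matrix.map_apply, charmatrix_apply_ne _ _ _ h, charmatrix_apply_ne _ _ _ h]
    simp [g, Matrix.sub_apply, Matrix.one_apply_ne h]

end Auxiliary

/-- For a semi-Schur matrix `A`, the iterates `x(k) = Aᵏ x₀` converge exponentially to the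
oblique projection `x*` of `x₀` onto `ker (A - I)` along `ran (A - I)`. -/
theorem semiSchur_LTI_convergence {n : ℕ} (A : Matrix (Fin n) (Fin n) ℝ)
    (hA : IsSemiSchur A) (x₀ : Fin n → ℝ) (xstar : Fin n → ℝ)
    (hker : xstar ∈ LinearMap.ker (A - 1).mulVecLin)
    (hran : x₀ - xstar ∈ LinearMap.range (A - 1).mulVecLin) :
    ∃ C > (0:ℝ), ∃ c > (0:ℝ), ∀ k : ℕ,
      ‖(A ^ k).mulVec x₀ - xstar‖ ≤ C * Real.exp (-c * k) := by
  classical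
  set B : Matrix (Fin n) (Fin n) ℂ := A.map (algebraMap ℝ ℂ) with hB
  have hB1 : B - 1 = (A - 1).map (algebraMap ℝ ℂ) := by
    ext i j
    by_cases h : i = j <;>
      simp [hB, Matrix.map_apply, Matrix.sub_apply, Matrix.one_apply, h]
  set φ : Module.End ℂ (Fin n → ℂ) := B.mulVecLin with hφ
  set ψ : Module.End ℂ (Fin n → ℂ) := (B - 1).mulVecLin with hψ
  have hψφ : ψ = φ - 1 := by
    rw [hψ, hφ, ← Matrix.toLin'_apply', ← Matrix.toLin'_apply', map_sub]
    congr 1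
    rw [Matrix.toLin'_apply', Matrix.mulVecLin_one]
    rfl
  set P : Polynomial ℂ := charpolyC A with hPdef
  have hPB : B.charpoly = P := Matrix.charpoly_map A (algebraMap ℝ ℂ)
  have hPmonic : P.Monic := (A.charpoly_monic).map _
  have hP0 : P ≠ 0 := hPmonic.ne_zero
  set m := P.rootMultiplicity 1 with hm
  obtain ⟨q, hq⟩ := P.pow_rootMultiplicity_dvd 1
  have hqmonic : q.Monic :=
    Polynomial.Monic.of_mul_monic_left ((monic_X_sub_C (1:ℂ)).pow m) (hq ▸ hPmonic)
  have hq1 : ¬ q.IsRoot 1 := by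
    intro h
    obtain ⟨q', hq'⟩ := dvd_iff_isRoot.mpr h
    have hdvd : (X - C (1:ℂ)) ^ (m + 1) ∣ P := ⟨q', by rw [hq, hq', pow_succ]; ring⟩
    have hle := (le_rootMultiplicity_iff hP0).mpr hdvd
    rw [← hm] at hle
    omega
  have hqroots : ∀ μ ∈ q.roots, ‖μ‖ < 1 := by
    intro μ hμ
    have hroot : q.IsRoot μ := isRoot_of_mem_roots hμ
    have hPμ : P.IsRoot μ := by
      rw [IsRoot.def, hq, eval_mul, hroot.eq_zero, mul_zero]
    rcases hA μ hPμ with h | h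
    · exact h
    · exact absurd (h.1 ▸ hroot) hq1
  have hqfact : q = (q.roots.map fun a => X - C a).prod :=
    (IsAlgClosed.splits q).eq_prod_roots_of_monic hqmonic
  have hcharφ : LinearMap.charpoly φ = P := by rw [hφ, charpoly_mulVecLin', hPB]
  have hcharψ : LinearMap.charpoly ψ = P.comp (X + C 1) := by
    rw [hψ, charpoly_mulVecLin', charpoly_shift, hPB]
  have hmax : Module.finrank ℂ (ψ.maxGenEigenspace 0) = m := by
    rw [LinearMap.finrank_maxGenEigenspace_zero_eq, hcharψ, hm,
      rootMultiplicity_eq_natTrailingDegree]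
  have hkerle : LinearMap.ker ψ ≤ ψ.maxGenEigenspace 0 := by
    intro x hx
    rw [Module.End.mem_maxGenEigenspace]
    refine ⟨1, ?_⟩
    simp only [zero_smul, sub_zero, pow_one]
    exact hx
  have hkermax : LinearMap.ker ψ = ψ.maxGenEigenspace 0 := by
    by_cases hroot1 : P.IsRoot 1
    · rcases hA 1 hroot1 with h | h
      · simp at h
      · have hdimc : Module.finrank ℂ (LinearMap.ker ψ) = m := by
          rw [hψ, hB1, finrank_ker_map, h.2]
        exact Submodule.eq_of_le_of_finrank_le hkerle (by rw [hmax, hdimc])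
    · have hm0 : m = 0 := by rw [hm]; exact rootMultiplicity_eq_zero hroot1
      have hbot : ψ.maxGenEigenspace 0 = ⊥ := by
        apply Submodule.finrank_eq_zero.mp
        rw [hmax, hm0]
      rw [hbot]
      exact le_antisymm (hbot ▸ hkerle) bot_le
  obtain ⟨u, hu⟩ := hran
  set y : Fin n → ℝ := x₀ - xstar with hy
  set yc : Fin n → ℂ := fun i => (y i : ℂ) with hyc
  set uc : Fin n → ℂ := fun i => (u i : ℂ) with huc
  have hu' : (A - 1).mulVec u = y := by
    rw [hy]
    exact hu
  have hucy : ψ uc = yc := by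
    rw [hψ, hB1]
    show ((A - 1).map (algebraMap ℝ ℂ)).mulVec uc = yc
    rw [huc, mulVec_map', hu']
  have hCH : Polynomial.aeval φ P = 0 := by
    rw [← hcharφ]
    exact LinearMap.aeval_self_charpoly φ
  have hψpoly : ψ = Polynomial.aeval φ (X - C (1:ℂ)) := by
    rw [hψφ, _root_.map_sub, aeval_X, aeval_C, _root_.map_one]
  have hannih : (Polynomial.aeval φ q) yc = 0 := by
    have e2 : (ψ ^ m) ((Polynomial.aeval φ q) uc) = 0 := by
      have hcomp : ψ ^ m * Polynomial.aeval φ q = 0 := by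
        have hpow : ψ ^ m = Polynomial.aeval φ ((X - C (1:ℂ)) ^ m) := by
          rw [hψpoly, map_pow]
        rw [hpow, ← _root_.map_mul, ← hq, hCH]
      calc (ψ ^ m) ((Polynomial.aeval φ q) uc) = (ψ ^ m * Polynomial.aeval φ q) uc := rfl
        _ = 0 := by rw [hcomp]; rfl
    have e3 : (Polynomial.aeval φ q) uc ∈ LinearMap.ker ψ := by
      rw [hkermax, Module.End.mem_maxGenEigenspace]
      refine ⟨m, ?_⟩
      simp only [zero_smul, sub_zero]
      exact e2
    have e1 : (Polynomial.aeval φ q) yc = ψ ((Polynomial.aeval φ q) uc) := by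
      rw [← hucy]
      have hcomm : Polynomial.aeval φ q * ψ = ψ * Polynomial.aeval φ q := by
        rw [hψpoly, ← _root_.map_mul, ← _root_.map_mul, mul_comm]
      calc (Polynomial.aeval φ q) (ψ uc) = ((Polynomial.aeval φ q) * ψ) uc := rfl
        _ = (ψ * Polynomial.aeval φ q) uc := by rw [hcomm]
        _ = ψ ((Polynomial.aeval φ q) uc) := rfl
    rw [e1]
    simpa using e3
  obtain ⟨r, Cd, hr0, hr1, hbound⟩ := decay_lemma φ q.roots hqroots yc
    (by rw [← hqfact]; exact hannih)
  have hx1 : A.mulVec xstar = xstar := by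
    have h := hker
    simp only [LinearMap.mem_ker, Matrix.mulVecLin_apply] at h
    rw [Matrix.sub_mulVec, Matrix.one_mulVec] at h
    exact sub_eq_zero.mp h
  have hxk : ∀ k : ℕ, (A ^ k).mulVec xstar = xstar := by
    intro k
    induction k with
    | zero => simp [Matrix.one_mulVec]
    | succ k ihk => rw [pow_succ', ← Matrix.mulVec_mulVec, ihk, hx1]
  have heq : ∀ k : ℕ, (A ^ k).mulVec x₀ - xstar = (A ^ k).mulVec y := by
    intro k
    rw [hy, Matrix.mulVec_sub, hxk k]
  have hnorm : ∀ k : ℕ, ‖(A ^ k).mulVec y‖ = ‖(φ ^ k) yc‖ := by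
    intro k
    have h1 : (φ ^ k) yc = (B ^ k).mulVec yc := by
      rw [hφ, ← mulVecLin_pow']
      rfl
    have h2 : B ^ k = (A ^ k).map (algebraMap ℝ ℂ) := by
      rw [hB, ← RingHom.mapMatrix_apply, ← RingHom.mapMatrix_apply, map_pow]
    rw [h1, h2, hyc, mulVec_map', norm_complexify]
  refine ⟨max Cd 1, lt_of_lt_of_le one_pos (le_max_right _ _), -Real.log r, ?_, ?_⟩
  · have := Real.log_neg hr0 hr1
    linarith
  · intro k
    have hrk : r ^ k = Real.exp (-(-Real.log r) * k) := by
      rw [neg_neg, mul_comm, Real.exp_nat_mul, Real.exp_log hr0]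
    calc ‖(A ^ k).mulVec x₀ - xstar‖ = ‖(φ ^ k) yc‖ := by rw [heq k, hnorm k]
      _ ≤ Cd * r ^ k := hbound k
      _ ≤ max Cd 1 * r ^ k := by
          have h6 := pow_nonneg (le_of_lt hr0) k
          nlinarith [le_max_left Cd 1]
      _ = max Cd 1 * Real.exp (-(-Real.log r) * k) := by rw [hrk]
end

section
/- Let Θ ∈ ℝ^{n×l}, Ξ ∈ ℝ^{n×m}, a > 0, and b ∈ ℝ. Then the block matrix M = [[−ΘΘᵀ − aΞΞᵀ, −bΞ]; [bΞᵀ, 0]] ∈ ℝ^{(n+m)×(n+m)} is semi-Hurwitz. -/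
open Matrix Polynomial

/-- A real square matrix is *semi-Hurwitz* if every (complex) eigenvalue either has negative
real part, or equals `0` and `0` is non-defective. -/
def IsSemiHurwitz {ι : Type*} [Fintype ι] [DecidableEq ι] (A : Matrix ι ι ℝ) : Prop :=
  ∀ μ : ℂ, (charpolyC A).IsRoot μ →
    μ.re < 0 ∨ (μ = 0 ∧
      Module.finrank ℝ (LinearMap.ker A.mulVecLin) = (charpolyC A).rootMultiplicity 0)



lemma exists_eigenvec {ι : Type*} [Fintype ι] [DecidableEq ι] {M : Matrix ι ι ℂ} {μ : ℂ}
    (h : M.charpoly.IsRoot μ) : ∃ v, v ≠ 0 ∧ M.mulVec v = μ • v := by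
  have hid : (μ • (1 : Matrix ι ι ℂ)) = diagonal fun _ => μ := by
    ext i j; by_cases hij : i = j <;> simp [Matrix.one_apply, Matrix.diagonal_apply, hij]
  have hdet : (μ • (1 : Matrix ι ι ℂ) - M).det = 0 := by
    rw [IsRoot, Matrix.charpoly, eval_det, matPolyEquiv_charmatrix] at h
    rw [hid]
    simpa using h
  obtain ⟨v, hv, hv0⟩ := (Matrix.exists_mulVec_eq_zero_iff).2 hdet
  refine ⟨v, hv, ?_⟩
  rw [Matrix.sub_mulVec, Matrix.smul_mulVec, Matrix.one_mulVec, sub_eq_zero] at hv0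
  exact hv0.symm


lemma dot_self_nonneg {ι : Type*} [Fintype ι] (v : ι → ℝ) : 0 ≤ v ⬝ᵥ v :=
  Finset.sum_nonneg fun i _ => mul_self_nonneg _

lemma dot_quad {ι κ : Type*} [Fintype ι] [Fintype κ] (x : ι → ℝ) (P : Matrix ι κ ℝ) :
    x ⬝ᵥ (P * Pᵀ) *ᵥ x = (Pᵀ *ᵥ x) ⬝ᵥ (Pᵀ *ᵥ x) := by
  rw [← Matrix.mulVec_mulVec, Matrix.dotProduct_mulVec, ← Matrix.mulVec_transpose]

section
variable {n l m : ℕ} (Θ : Matrix (Fin n) (Fin l) ℝ) (Ξ : Matrix (Fin n) (Fin m) ℝ) (a b : ℝ)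

lemma ker_transpose (ha : 0 < a) (w : (Fin n ⊕ Fin m) → ℝ)
    (hw : (Matrix.fromBlocks (-(Θ * Θᵀ) - a • (Ξ * Ξᵀ)) (-b • Ξ) (b • Ξᵀ) 0) *ᵥ w = 0) :
    (Matrix.fromBlocks (-(Θ * Θᵀ) - a • (Ξ * Ξᵀ)) (-b • Ξ) (b • Ξᵀ) 0)ᵀ *ᵥ w = 0 := by
  set x : Fin n → ℝ := w ∘ Sum.inl with hx
  set y : Fin m → ℝ := w ∘ Sum.inr with hy
  rw [Matrix.fromBlocks_mulVec] at hw
  have h1 : (-(Θ * Θᵀ) - a • (Ξ * Ξᵀ)) *ᵥ x + ((-b) • Ξ) *ᵥ y = 0 := by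
    funext i; exact congrFun hw (Sum.inl i)
  have h2' : b • (Ξᵀ *ᵥ x) = 0 := by
    rw [← Matrix.smul_mulVec]
    funext j; simpa using congrFun hw (Sum.inr j)
  have hd1 : x ⬝ᵥ ((-(Θ * Θᵀ) - a • (Ξ * Ξᵀ)) *ᵥ x) + x ⬝ᵥ (((-b) • Ξ) *ᵥ y) = 0 := by
    rw [← dotProduct_add, h1, dotProduct_zero]
  have hcross : x ⬝ᵥ (((-b) • Ξ) *ᵥ y) = (-b) * ((Ξᵀ *ᵥ x) ⬝ᵥ y) := by
    rw [Matrix.smul_mulVec, dotProduct_smul, Matrix.dotProduct_mulVec,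
      ← Matrix.mulVec_transpose]
    simp [smul_eq_mul]
  have hbx : b * ((Ξᵀ *ᵥ x) ⬝ᵥ y) = 0 := by
    have := congrArg (fun v => v ⬝ᵥ y) h2'
    simpa [smul_dotProduct, smul_eq_mul] using this
  have e1 : x ⬝ᵥ ((-(Θ * Θᵀ) - a • (Ξ * Ξᵀ)) *ᵥ x)
      = -((Θᵀ *ᵥ x) ⬝ᵥ (Θᵀ *ᵥ x)) - a * ((Ξᵀ *ᵥ x) ⬝ᵥ (Ξᵀ *ᵥ x)) := by
    rw [Matrix.sub_mulVec, Matrix.neg_mulVec, Matrix.smul_mulVec,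
      dotProduct_sub, dotProduct_neg, dotProduct_smul,
      dot_quad, dot_quad]
    simp [smul_eq_mul]
  rw [e1, hcross, neg_mul, ← hbx] at hd1
  have hT0 := dot_self_nonneg (Θᵀ *ᵥ x)
  have hX0 := dot_self_nonneg (Ξᵀ *ᵥ x)
  have hTx : Θᵀ *ᵥ x = 0 :=
    dotProduct_self_eq_zero.mp (by nlinarith)
  have hXx : Ξᵀ *ᵥ x = 0 :=
    dotProduct_self_eq_zero.mp (by nlinarith)
  have hAx : (-(Θ * Θᵀ) - a • (Ξ * Ξᵀ)) *ᵥ x = 0 := by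
    rw [Matrix.sub_mulVec, Matrix.neg_mulVec, Matrix.smul_mulVec,
      ← Matrix.mulVec_mulVec, ← Matrix.mulVec_mulVec, hTx, hXx]
    simp
  have hXy : (b : ℝ) • (Ξ *ᵥ y) = 0 := by
    have : ((-b) • Ξ) *ᵥ y = 0 := by rw [hAx, zero_add] at h1; exact h1
    rw [Matrix.smul_mulVec] at this
    have := congrArg Neg.neg this
    simpa [neg_smul] using this
  rw [Matrix.fromBlocks_transpose, Matrix.transpose_zero]
  rw [Matrix.fromBlocks_mulVec]
  have hAT : (-(Θ * Θᵀ) - a • (Ξ * Ξᵀ))ᵀ = (-(Θ * Θᵀ) - a • (Ξ * Ξᵀ)) := by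
    simp [Matrix.transpose_sub, Matrix.transpose_neg, Matrix.transpose_mul,
      Matrix.transpose_smul, Matrix.mul_assoc]
  funext i
  rcases i with i | j
  · simp only [Sum.elim_inl, ← hx, ← hy, hAT]
    rw [Matrix.transpose_smul, Matrix.transpose_transpose, hAx,
      Matrix.smul_mulVec, hXy]
    simp
  · simp only [Sum.elim_inr, ← hx, ← hy]
    rw [Matrix.transpose_smul, Matrix.smul_mulVec, hXx]
    simp
end


noncomputable def csum {ι : Type*} [Fintype ι] (u : ι → ℂ) : ℝ := ∑ i, Complex.normSq (u i)

lemma csum_nonneg {ι : Type*} [Fintype ι] (u : ι → ℂ) : 0 ≤ csum u :=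
  Finset.sum_nonneg fun _ _ => Complex.normSq_nonneg _

lemma csum_eq_zero {ι : Type*} [Fintype ι] {u : ι → ℂ} (h : csum u = 0) : u = 0 := by
  funext i
  have := (Finset.sum_eq_zero_iff_of_nonneg (fun i _ => Complex.normSq_nonneg (u i))).mp h i
    (Finset.mem_univ i)
  simpa [Complex.normSq_eq_zero] using this

lemma cdot {ι : Type*} [Fintype ι] (u : ι → ℂ) : star u ⬝ᵥ u = ((csum u : ℝ) : ℂ) := by
  simp [dotProduct, csum, Complex.normSq_eq_conj_mul_self, Complex.star_def]

lemma realmat_conjT {ι κ : Type*} (Z : Matrix ι κ ℝ) :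
    (Z.map (algebraMap ℝ ℂ))ᴴ = Zᵀ.map (algebraMap ℝ ℂ) := by
  ext i j
  simp [Matrix.conjTranspose_apply, Complex.conj_ofReal]

lemma cdot_quad {ι κ : Type*} [Fintype ι] [Fintype κ] (x : ι → ℂ) (Z : Matrix ι κ ℝ) :
    star x ⬝ᵥ ((Z.map (algebraMap ℝ ℂ) * (Z.map (algebraMap ℝ ℂ))ᵀ) *ᵥ x)
      = ((csum ((Z.map (algebraMap ℝ ℂ))ᵀ *ᵥ x) : ℝ) : ℂ) := by
  have hsm : star x ᵥ* Z.map (algebraMap ℝ ℂ) = star ((Z.map (algebraMap ℝ ℂ))ᵀ *ᵥ x) := by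
    rw [Matrix.star_mulVec]
    congr 1
    rw [← Matrix.transpose_map, realmat_conjT, Matrix.transpose_transpose]
  rw [← Matrix.mulVec_mulVec, Matrix.dotProduct_mulVec, hsm, cdot]

section
variable {n l m : ℕ} (Θ : Matrix (Fin n) (Fin l) ℝ) (Ξ : Matrix (Fin n) (Fin m) ℝ) (a b : ℝ)

lemma map_block : (Matrix.fromBlocks (-(Θ * Θᵀ) - a • (Ξ * Ξᵀ)) (-b • Ξ) (b • Ξᵀ) 0).map
      (algebraMap ℝ ℂ) =
    Matrix.fromBlocks
      (-(Θ.map (algebraMap ℝ ℂ) * (Θ.map (algebraMap ℝ ℂ))ᵀ)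
        - (a : ℂ) • (Ξ.map (algebraMap ℝ ℂ) * (Ξ.map (algebraMap ℝ ℂ))ᵀ))
      ((-(b : ℂ)) • Ξ.map (algebraMap ℝ ℂ)) ((b : ℂ) • (Ξ.map (algebraMap ℝ ℂ))ᵀ) 0 := by
  ext (i | j) (i' | j') <;>
    simp [Matrix.map_apply, Matrix.mul_apply, Matrix.smul_apply, Matrix.sub_apply,
      Matrix.neg_apply, Matrix.transpose_apply] <;>
    push_cast <;> ring

lemma eig_re (ha : 0 < a) {μ : ℂ} {v : (Fin n ⊕ Fin m) → ℂ} (hv : v ≠ 0)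
    (heig : ((Matrix.fromBlocks (-(Θ * Θᵀ) - a • (Ξ * Ξᵀ)) (-b • Ξ) (b • Ξᵀ) 0).map
      (algebraMap ℝ ℂ)) *ᵥ v = μ • v) :
    μ.re < 0 ∨ μ = 0 := by
  set P := Θ.map (algebraMap ℝ ℂ) with hP
  set Q := Ξ.map (algebraMap ℝ ℂ) with hQ
  rw [map_block, Matrix.fromBlocks_mulVec] at heig
  set x : Fin n → ℂ := v ∘ Sum.inl with hx
  set y : Fin m → ℂ := v ∘ Sum.inr with hy
  have h1 : (-(P * Pᵀ) - (a : ℂ) • (Q * Qᵀ)) *ᵥ x + ((-(b : ℂ)) • Q) *ᵥ y = μ • x := by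
    funext i; exact congrFun heig (Sum.inl i)
  have h2 : (b : ℂ) • (Qᵀ *ᵥ x) = μ • y := by
    rw [← Matrix.smul_mulVec]
    funext j; simpa [hQ, hy] using congrFun heig (Sum.inr j)
  set t : ℂ := star x ⬝ᵥ (Q *ᵥ y) with ht
  -- dot h1 with star x
  have hd1 : ((-(csum (Pᵀ *ᵥ x)) - a * csum (Qᵀ *ᵥ x) : ℝ) : ℂ) + (-(b : ℂ)) * t
      = μ * ((csum x : ℝ) : ℂ) := by
    have := congrArg (fun u => star x ⬝ᵥ u) h1
    simp only [dotProduct_add] at this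
    rw [Matrix.sub_mulVec, Matrix.neg_mulVec, Matrix.smul_mulVec,
      dotProduct_sub, dotProduct_neg, dotProduct_smul,
      cdot_quad, cdot_quad, Matrix.smul_mulVec, dotProduct_smul] at this
    rw [dotProduct_smul, cdot] at this
    simp only [smul_eq_mul] at this
    rw [ht]
    push_cast at this ⊢
    linear_combination this
  -- dot h2 with star y
  have hyx : star y ⬝ᵥ (Qᵀ *ᵥ x) = (starRingEnd ℂ) t := by
    rw [Matrix.dotProduct_mulVec]
    have hst : star y ᵥ* Qᵀ = star (Q *ᵥ y) := by
      rw [Matrix.star_mulVec, hQ, realmat_conjT, Matrix.transpose_map]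
    rw [hst, Matrix.star_dotProduct, ht]
    rfl
  have hd2 : (b : ℂ) * (starRingEnd ℂ) t = μ * ((csum y : ℝ) : ℂ) := by
    have h2d := congrArg (fun u => star y ⬝ᵥ u) h2
    simp only [dotProduct_smul, cdot, hyx, smul_eq_mul] at h2d
    exact h2d
  -- sum and take real parts
  have hre : -(csum (Pᵀ *ᵥ x) + a * csum (Qᵀ *ᵥ x)) = μ.re * (csum x + csum y) := by
    have hsum := congrArg Complex.re (congrArg₂ (· + ·) hd1 hd2)
    simp only [Complex.add_re, Complex.mul_re, Complex.ofReal_re, Complex.ofReal_im,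
      Complex.neg_re, Complex.neg_im, Complex.conj_re, Complex.conj_im, Complex.ofReal_neg, Complex.sub_re,
      mul_zero, zero_mul, sub_zero, neg_zero, add_zero] at hsum
    linarith [hsum]
  have hv0 : 0 < csum x + csum y := by
    have hnn : 0 ≤ csum x + csum y := add_nonneg (csum_nonneg x) (csum_nonneg y)
    rcases hnn.lt_or_eq with h | h
    · exact h
    exfalso; apply hv
    have hx0 : x = 0 := csum_eq_zero (by linarith [csum_nonneg x, csum_nonneg y])
    have hy0 : y = 0 := csum_eq_zero (by linarith [csum_nonneg x, csum_nonneg y])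
    funext i
    rcases i with i | j
    · have := congrFun hx0 i; simpa [hx] using this
    · have := congrFun hy0 j; simpa [hy] using this
  by_cases hlt : μ.re < 0
  · exact Or.inl hlt
  push_neg at hlt
  right
  have hmul : 0 ≤ μ.re * (csum x + csum y) := mul_nonneg hlt hv0.le
  have hr1 : csum (Pᵀ *ᵥ x) = 0 := by
    nlinarith [csum_nonneg (Pᵀ *ᵥ x), csum_nonneg (Qᵀ *ᵥ x)]
  have hr2 : csum (Qᵀ *ᵥ x) = 0 := by
    nlinarith [csum_nonneg (Pᵀ *ᵥ x), csum_nonneg (Qᵀ *ᵥ x)]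
  have hPx : Pᵀ *ᵥ x = 0 := csum_eq_zero hr1
  have hQx : Qᵀ *ᵥ x = 0 := csum_eq_zero hr2
  have hμy : μ • y = 0 := by rw [← h2, hQx, smul_zero]
  have hAx : (-(P * Pᵀ) - (a : ℂ) • (Q * Qᵀ)) *ᵥ x = 0 := by
    rw [Matrix.sub_mulVec, Matrix.neg_mulVec, Matrix.smul_mulVec,
      ← Matrix.mulVec_mulVec, ← Matrix.mulVec_mulVec, hPx, hQx]
    simp
  have hμx : ((-(b : ℂ)) • Q) *ᵥ y = μ • x := by rw [hAx, zero_add] at h1; exact h1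
  by_contra hμ0
  have hy0 : y = 0 := by
    rcases smul_eq_zero.mp hμy with h | h
    · exact absurd h hμ0
    · exact h
  have hx0 : x = 0 := by
    have : μ • x = 0 := by
      rw [← hμx, hy0, Matrix.mulVec_zero]
    rcases smul_eq_zero.mp this with h | h
    · exact absurd h hμ0
    · exact h
  apply hv
  funext i
  rcases i with i | j
  · have := congrFun hx0 i; simpa [hx] using this
  · have := congrFun hy0 j; simpa [hy] using this
end

section
variable {n l m : ℕ} (Θ : Matrix (Fin n) (Fin l) ℝ) (Ξ : Matrix (Fin n) (Fin m) ℝ) (a b : ℝ)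

lemma finrank_ker_eq (ha : 0 < a) :
    Module.finrank ℝ (LinearMap.ker
        (Matrix.fromBlocks (-(Θ * Θᵀ) - a • (Ξ * Ξᵀ)) (-b • Ξ) (b • Ξᵀ) 0).mulVecLin)
      = (charpolyC
        (Matrix.fromBlocks (-(Θ * Θᵀ) - a • (Ξ * Ξᵀ)) (-b • Ξ) (b • Ξᵀ) 0)).rootMultiplicity 0 := by
  set M0 : Matrix (Fin n ⊕ Fin m) (Fin n ⊕ Fin m) ℝ :=
    Matrix.fromBlocks (-(Θ * Θᵀ) - a • (Ξ * Ξᵀ)) (-b • Ξ) (b • Ξᵀ) 0 with hM0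
  set φ : Module.End ℝ ((Fin n ⊕ Fin m) → ℝ) := M0.mulVecLin with hφ
  have hchar : M0.charpoly = LinearMap.charpoly φ := by
    rw [← LinearMap.charpoly_toMatrix φ (Pi.basisFun ℝ _), LinearMap.toMatrix_eq_toMatrix',
      hφ, ← Matrix.toLin'_apply', LinearMap.toMatrix'_toLin']
  have hker2 : ∀ u, φ (φ u) = 0 → φ u = 0 := by
    intro u h
    have hT := ker_transpose Θ Ξ a b ha (M0 *ᵥ u) h
    have hdot : (M0 *ᵥ u) ⬝ᵥ (M0 *ᵥ u) = 0 := by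
      conv_lhs => rw [Matrix.dotProduct_mulVec, ← Matrix.mulVec_transpose, hT,
        zero_dotProduct]
    exact dotProduct_self_eq_zero.mp hdot
  have hpow : ∀ k u, (φ ^ (k + 1)) u = 0 → φ u = 0 := by
    intro k
    induction k with
    | zero => intro u h; simpa [pow_one] using h
    | succ k ih =>
      intro u h
      rw [pow_succ, Module.End.mul_apply] at h
      exact hker2 u (ih (φ u) h)
  have hmax : φ.maxGenEigenspace 0 = LinearMap.ker φ := by
    ext u
    rw [Module.End.mem_maxGenEigenspace, LinearMap.mem_ker]
    simp only [zero_smul, sub_zero]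
    constructor
    · rintro ⟨k, hk⟩
      cases k with
      | zero =>
        simp only [pow_zero, Module.End.one_apply] at hk
        rw [hk]; exact map_zero φ
      | succ k => exact hpow k u hk
    · intro h; exact ⟨1, by simpa [pow_one] using h⟩
  have hmult : (charpolyC M0).rootMultiplicity 0 = M0.charpoly.rootMultiplicity 0 := by
    have h0 := Polynomial.eq_rootMultiplicity_map
      (p := M0.charpoly) (f := algebraMap ℝ ℂ) (algebraMap ℝ ℂ).injective 0
    rw [map_zero] at h0
    rw [charpolyC]
    exact h0.symm
  rw [hmult, Polynomial.rootMultiplicity_eq_natTrailingDegree', hchar,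
    ← LinearMap.finrank_maxGenEigenspace_zero_eq, hmax]
end

/-- The block matrix `M = [[−ΘΘᵀ − aΞΞᵀ, −bΞ]; [bΞᵀ, 0]]` is semi-Hurwitz for all
`Θ ∈ ℝ^{n×l}`, `Ξ ∈ ℝ^{n×m}`, `a > 0` and `b ∈ ℝ`. -/
theorem blockMatrix_isSemiHurwitz {n l m : ℕ}
    (Θ : Matrix (Fin n) (Fin l) ℝ) (Ξ : Matrix (Fin n) (Fin m) ℝ)
    (a : ℝ) (ha : 0 < a) (b : ℝ) :
    IsSemiHurwitz
      (Matrix.fromBlocks (-(Θ * Θᵀ) - a • (Ξ * Ξᵀ)) (-b • Ξ) (b • Ξᵀ) 0) := by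
  intro μ hroot
  have hroot' : ((Matrix.fromBlocks (-(Θ * Θᵀ) - a • (Ξ * Ξᵀ)) (-b • Ξ) (b • Ξᵀ) 0).map
      (algebraMap ℝ ℂ)).charpoly.IsRoot μ := by
    rw [Matrix.charpoly_map]; exact hroot
  obtain ⟨v, hv, heig⟩ := exists_eigenvec hroot'
  rcases eig_re Θ Ξ a b ha hv heig with h | h
  · exact Or.inl h
  · exact Or.inr ⟨h, finrank_ker_eq Θ Ξ a b ha⟩
end

section
/- If A ∈ ℝ^{n×n} is semi-Hurwitz, then there exists ᾱ > 0 such that for every α ∈ (0, ᾱ) the matrix I + αA is semi-Schur. -/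
open Matrix Polynomial

lemma myEvalCharpoly {R : Type*} [CommRing R] {m : Type*} [Fintype m] [DecidableEq m]
    (M : Matrix m m R) (μ : R) : M.charpoly.eval μ = (μ • (1 : Matrix m m R) - M).det := by
  rw [Matrix.charpoly, eval_det, matPolyEquiv_charmatrix]
  simp [Matrix.scalar, Algebra.algebraMap_eq_smul_one, smul_one_eq_diagonal]

lemma eval_charpolyC {n : ℕ} (A : Matrix (Fin n) (Fin n) ℝ) (μ : ℂ) :
    (charpolyC A).eval μ =
      (μ • (1 : Matrix (Fin n) (Fin n) ℂ) - A.map (algebraMap ℝ ℂ)).det := by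
  rw [charpolyC, ← Matrix.charpoly_map A (algebraMap ℝ ℂ), myEvalCharpoly]

lemma map_one_add_smul {n : ℕ} (A : Matrix (Fin n) (Fin n) ℝ) (α : ℝ) :
    ((1 : Matrix (Fin n) (Fin n) ℝ) + α • A).map (algebraMap ℝ ℂ) =
      (1 : Matrix (Fin n) (Fin n) ℂ) + (α : ℂ) • A.map (algebraMap ℝ ℂ) := by
  ext i j
  by_cases h : i = j <;>
    simp [Matrix.map_apply, Matrix.one_apply, Matrix.add_apply, Matrix.smul_apply, h]

lemma charpolyC_one_add_smul {n : ℕ} (A : Matrix (Fin n) (Fin n) ℝ) {α : ℝ} (hα : α ≠ 0) :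
    charpolyC ((1 : Matrix (Fin n) (Fin n) ℝ) + α • A) =
      C ((α:ℂ)^n) * (charpolyC A).comp (C ((α:ℂ)⁻¹) * (X - 1)) := by
  have ha : (α : ℂ) ≠ 0 := by exact_mod_cast hα
  apply Polynomial.funext
  intro μ
  rw [eval_charpolyC, map_one_add_smul]
  have key : μ • (1 : Matrix (Fin n) (Fin n) ℂ) -
      ((1 : Matrix (Fin n) (Fin n) ℂ) + (α : ℂ) • A.map (algebraMap ℝ ℂ)) =
      (α : ℂ) • (((α:ℂ)⁻¹ * (μ - 1)) • (1 : Matrix (Fin n) (Fin n) ℂ) -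
        A.map (algebraMap ℝ ℂ)) := by
    rw [smul_sub, smul_smul]
    have : (α:ℂ) * ((α:ℂ)⁻¹ * (μ - 1)) = μ - 1 := by field_simp
    rw [this, sub_smul, one_smul, sub_add_eq_sub_sub]
  rw [key, Matrix.det_smul, Fintype.card_fin]
  simp only [eval_mul, eval_C, eval_comp, eval_mul, eval_sub, eval_X, eval_one]
  rw [eval_charpolyC]

lemma mult_lemma {p : Polynomial ℂ} (hp : p ≠ 0) {a c : ℂ} (ha : a ≠ 0) (hc : c ≠ 0) :
    rootMultiplicity 1 (C c * p.comp (C a⁻¹ * (X - 1))) = rootMultiplicity 0 p := by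
  set k := rootMultiplicity 0 p with hk
  set q := p /ₘ (X - C (0:ℂ))^k with hqdef
  have hfac : (X - C (0:ℂ))^k * q = p := pow_mul_divByMonic_rootMultiplicity_eq p 0
  have hq0 : q.eval 0 ≠ 0 := eval_divByMonic_pow_rootMultiplicity_ne_zero 0 hp
  set l : Polynomial ℂ := C a⁻¹ * (X - 1) with hl
  have hcomp : p.comp l = (C a⁻¹)^k * ((X - 1)^k * q.comp l) := by
    conv_lhs => rw [← hfac]
    rw [mul_comp, pow_comp, sub_comp, X_comp, C_comp]
    simp only [map_zero, sub_zero, hl, mul_pow]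
    ring
  have hql1 : (q.comp l).eval 1 ≠ 0 := by
    rw [eval_comp]
    simpa [hl] using hq0
  have hql : q.comp l ≠ 0 := fun h => hql1 (by simp [h])
  have hXk : ((X - 1 : Polynomial ℂ)^k * q.comp l) ≠ 0 := by
    apply mul_ne_zero _ hql
    apply pow_ne_zero
    rw [← C_1]
    exact X_sub_C_ne_zero 1
  have hCa : (C a⁻¹ : Polynomial ℂ) ≠ 0 := by simpa using inv_ne_zero ha
  have hall : C c * p.comp l ≠ 0 := by
    rw [hcomp]
    exact mul_ne_zero (by simpa using hc) (mul_ne_zero (pow_ne_zero _ hCa) hXk)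
  rw [hcomp, ← mul_assoc]
  rw [rootMultiplicity_mul (by rw [mul_assoc, ← hcomp]; exact hall),
    rootMultiplicity_mul hXk]
  have h1 : rootMultiplicity 1 (C c * C a⁻¹ ^ k) = 0 := by
    apply rootMultiplicity_eq_zero
    simp [IsRoot, hc, ha]
  have h2 : rootMultiplicity 1 ((X - 1 : Polynomial ℂ)^k) = k := by
    rw [← C_1]
    exact rootMultiplicity_X_sub_C_pow 1 k
  have h3 : rootMultiplicity 1 (q.comp l) = 0 := rootMultiplicity_eq_zero hql1
  rw [h1, h2, h3]
  omega

/-- If `A` is semi-Hurwitz, then `I + αA` is semi-Schur for all sufficiently small `α > 0`. -/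
theorem one_add_smul_isSemiSchur_of_isSemiHurwitz {n : ℕ} (A : Matrix (Fin n) (Fin n) ℝ)
    (hA : IsSemiHurwitz A) :
    ∃ αbar > (0:ℝ), ∀ α : ℝ, 0 < α → α < αbar →
      IsSemiSchur ((1 : Matrix (Fin n) (Fin n) ℝ) + α • A) := by
  classical
  set p := charpolyC A with hp
  have hpmonic : p.Monic := (A.charpoly_monic).map (algebraMap ℝ ℂ)
  have hpne : p ≠ 0 := hpmonic.ne_zero
  set f : ℂ → ℝ := fun μ => 2 * (-μ.re) / ‖μ‖^2 with hf
  set S : Finset ℂ := p.roots.toFinset.filter (fun μ => μ.re < 0) with hS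
  have hfpos : ∀ μ ∈ S, 0 < f μ := by
    intro μ hμ
    rw [hS, Finset.mem_filter] at hμ
    have hre : μ.re < 0 := hμ.2
    have hμ0 : μ ≠ 0 := fun h => by simp [h] at hre
    have habs : 0 < ‖μ‖ := norm_pos_iff.mpr hμ0
    exact div_pos (by linarith) (pow_pos habs 2)
  set αbar : ℝ := if h : S.Nonempty then min 1 (S.inf' h f) else 1 with hαbar
  have hαbarpos : 0 < αbar := by
    rw [hαbar]
    split_ifs with h
    · exact lt_min one_pos (by rw [Finset.lt_inf'_iff]; exact hfpos)
    · exact one_pos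
  have hαbarle : ∀ μ ∈ S, αbar ≤ f μ := by
    intro μ hμ
    rw [hαbar, dif_pos ⟨μ, hμ⟩]
    exact le_trans (min_le_right _ _) (Finset.inf'_le f hμ)
  refine ⟨αbar, hαbarpos, ?_⟩
  intro α hα0 hαlt ν hν
  have hαne : α ≠ 0 := ne_of_gt hα0
  have ha : (α : ℂ) ≠ 0 := by exact_mod_cast hαne
  have hkey := charpolyC_one_add_smul A hαne
  set μ0 : ℂ := (α:ℂ)⁻¹ * (ν - 1) with hμ0
  have hν_eq : ν = 1 + (α:ℂ) * μ0 := by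
    rw [hμ0]
    field_simp
    ring
  have hμroot : p.IsRoot μ0 := by
    have := hν
    rw [IsRoot, hkey, eval_mul, eval_C, eval_comp] at this
    simp only [eval_mul, eval_C, eval_sub, eval_X, eval_one] at this
    rcases mul_eq_zero.mp this with h | h
    · exact absurd h (pow_ne_zero _ ha)
    · exact h
  rcases hA μ0 hμroot with hre | ⟨hz, hrank⟩
  · left
    have hμS : μ0 ∈ S := by
      rw [hS, Finset.mem_filter, Multiset.mem_toFinset]
      exact ⟨(mem_roots hpne).mpr hμroot, hre⟩
    have hb : α < f μ0 := lt_of_lt_of_le hαlt (hαbarle μ0 hμS)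
    have habs2 : (0:ℝ) < ‖μ0‖^2 := by
      have hμne : μ0 ≠ 0 := fun h => by simp [h] at hre
      exact pow_pos (norm_pos_iff.mpr hμne) 2
    have hb' : α * ‖μ0‖^2 < 2 * (-μ0.re) := by
      rw [hf] at hb
      exact (lt_div_iff₀ habs2).mp hb
    have hnormsq : ‖μ0‖^2 = μ0.re^2 + μ0.im^2 := by
      rw [Complex.sq_norm, Complex.normSq_apply]; ring
    have hrν : ν.re = 1 + α * μ0.re := by
      rw [hν_eq]; simp
    have hiν : ν.im = α * μ0.im := by
      rw [hν_eq]; simp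
    have hsq : ‖ν‖^2 < 1 := by
      rw [Complex.sq_norm, Complex.normSq_apply, hrν, hiν]
      rw [hnormsq] at hb'
      nlinarith [hα0, hb']
    nlinarith [norm_nonneg ν, hsq]
  · right
    have hν1 : ν = 1 := by rw [hν_eq, hz]; ring
    refine ⟨hν1, ?_⟩
    have hker : ((1 : Matrix (Fin n) (Fin n) ℝ) + α • A - 1).mulVecLin
        = α • A.mulVecLin := by
      rw [add_sub_cancel_left]
      apply LinearMap.ext
      intro v
      simp [Matrix.mulVecLin_apply, Matrix.smul_mulVec]
    rw [hker, LinearMap.ker_smul _ α hαne, hkey,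
      mult_lemma hpne ha (pow_ne_zero n ha)]
    exact hrank
end
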